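/- Let $K$ be a field with a proper adelic structure satisfying Northcott's property, and suppose there is a positive integer $p_0$ such that $F_p(K)$ is finite for every prime $p \geq p_0$. Then the set of positive integers $N$ such that the Fermat curve $F_N$ has Fermat's property over $K$ has natural density $1$: $\lim_{m\to\infty} \#\{1 \leq N \leq m : F_N \text{ has Fermat's property over } K\}/m = 1$. -/

import Mathlib

open MeasureTheory

/-- A (proper) adelic structure on a field `K`: a measure space `Ω`, a family of
absolute values of `K` indexed by `Ω`, such that `ω ↦ log |a|_ω` is integrable for
every `a ∈ K^×`, and the product formula `∫ log |a|_ω dν = 0` holds. -/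
structure ProperAdelicStructure (K : Type) [Field K] (Ω : Type) [MeasurableSpace Ω] where
  ν : Measure Ω
  absv : Ω → AbsoluteValue K ℝ
  integrable_log : ∀ a : K, a ≠ 0 → Integrable (fun ω => Real.log (absv ω a)) ν
  product_formula : ∀ a : K, a ≠ 0 → ∫ ω, Real.log (absv ω a) ∂ν = 0

/-- The height of a tuple of elements of `K` with respect to an adelic structure. -/
noncomputable def ProperAdelicStructure.height {K Ω : Type} [Field K] [MeasurableSpace Ω]
    (S : ProperAdelicStructure K Ω) {m : ℕ} (x : Fin m → K) : ℝ :=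
  ∫ ω, Real.log (⨆ i, S.absv ω (x i)) ∂S.ν

/-- Northcott's property: sets of elements of `K` of bounded height are finite. -/
def ProperAdelicStructure.Northcott {K Ω : Type} [Field K] [MeasurableSpace Ω]
    (S : ProperAdelicStructure K Ω) : Prop :=
  ∀ C : ℝ, {a : K | ∫ ω, Real.log (max (S.absv ω a) 1) ∂S.ν ≤ C}.Finite

/-- `x` is zero or a root of unity. -/
def IsZeroOrRootOfUnity {K : Type} [Field K] (x : K) : Prop :=
  x = 0 ∨ ∃ k : ℕ, 0 < k ∧ x ^ k = 1

namespace FPD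

variable {K Ω : Type} [Field K] [MeasurableSpace Ω]

/-- The (logarithmic, affine) height of an element. -/
noncomputable def hgt (S : ProperAdelicStructure K Ω) (a : K) : ℝ :=
  ∫ ω, Real.log (max (S.absv ω a) 1) ∂S.ν

lemma hgt_nonneg (S : ProperAdelicStructure K Ω) (a : K) : 0 ≤ hgt S a :=
  integral_nonneg fun _ => Real.log_nonneg (le_max_right _ _)

lemma max_pow_one {x : ℝ} (hx : 0 ≤ x) (k : ℕ) : max (x ^ k) 1 = (max x 1) ^ k := by
  rcases le_total x 1 with h | h
  · rw [max_eq_right h, max_eq_right (pow_le_one₀ hx h), one_pow]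
  · rw [max_eq_left h, max_eq_left (one_le_pow₀ h)]

lemma hgt_pow (S : ProperAdelicStructure K Ω) (a : K) (k : ℕ) :
    hgt S (a ^ k) = k * hgt S a := by
  unfold hgt
  rw [← integral_const_mul]
  congr 1 with ω
  rw [map_pow, max_pow_one ((S.absv ω).nonneg a), Real.log_pow]

lemma exists_rou_of_pow_eq {a : K} (ha0 : a ≠ 0) {i j : ℕ} (hij : i ≠ j)
    (h : a ^ i = a ^ j) : ∃ k : ℕ, 0 < k ∧ a ^ k = 1 := by
  rcases hij.lt_or_gt with hlt | hlt
  · refine ⟨j - i, Nat.sub_pos_of_lt hlt, ?_⟩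
    rw [show j = i + (j - i) by omega, pow_add] at h
    exact (mul_right_eq_self₀.mp h.symm).resolve_right (pow_ne_zero i ha0)
  · refine ⟨i - j, Nat.sub_pos_of_lt hlt, ?_⟩
    rw [show i = j + (i - j) by omega, pow_add] at h
    exact (mul_right_eq_self₀.mp h).resolve_right (pow_ne_zero j ha0)

lemma pow_injective_of_not_rou {a : K} (ha : ¬ IsZeroOrRootOfUnity a) :
    Function.Injective (fun k : ℕ => a ^ k) := by
  intro i j h
  by_contra hne
  exact ha (Or.inr (exists_rou_of_pow_eq (fun h0 => ha (Or.inl h0)) hne h))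

lemma exists_pow_eq_one_of_hgt_le_zero (S : ProperAdelicStructure K Ω)
    (hNor : ∀ C : ℝ, {a : K | ∫ ω, Real.log (max (S.absv ω a) 1) ∂S.ν ≤ C}.Finite)
    {a : K} (ha : a ≠ 0) (h : hgt S a ≤ 0) : ∃ k : ℕ, 0 < k ∧ a ^ k = 1 := by
  have hfin : {b : K | hgt S b ≤ 0}.Finite := hNor 0
  have hmem : ∀ n : ℕ, a ^ n ∈ {b : K | hgt S b ≤ 0} := by
    intro n
    simp only [Set.mem_setOf_eq, hgt_pow]
    exact mul_nonpos_of_nonneg_of_nonpos (Nat.cast_nonneg n) h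
  haveI : Finite {b : K // b ∈ {b : K | hgt S b ≤ 0}} := hfin
  obtain ⟨i, j, hij, hpow⟩ := Finite.exists_ne_map_eq_of_infinite
    (fun n : ℕ => (⟨a ^ n, hmem n⟩ : {b : K // b ∈ {b : K | hgt S b ≤ 0}}))
  exact exists_rou_of_pow_eq ha hij (congrArg Subtype.val hpow)

lemma hgt_pos (S : ProperAdelicStructure K Ω)
    (hNor : ∀ C : ℝ, {a : K | ∫ ω, Real.log (max (S.absv ω a) 1) ∂S.ν ≤ C}.Finite)
    {a : K} (ha : ¬ IsZeroOrRootOfUnity a) : 0 < hgt S a := by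
  rcases lt_or_ge 0 (hgt S a) with h | h
  · exact h
  · exfalso
    have ha0 : a ≠ 0 := fun h0 => ha (Or.inl h0)
    exact ha (Or.inr (exists_pow_eq_one_of_hgt_le_zero S hNor ha0 h))


section Affine

variable (K : Type) [Field K]

lemma affvec_ne_zero (x y : K) : (![x, y, 1] : Fin 3 → K) ≠ 0 := by
  intro h
  simpa using congrFun h 2

/-- Finiteness of the affine Fermat solution set from projective finiteness. -/
lemma affine_fermat_finite {p : ℕ}
    (hfin : {q : Projectivization K (Fin 3 → K) |
        q.rep 0 ^ p + q.rep 1 ^ p = q.rep 2 ^ p}.Finite) :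
    {xy : K × K | xy.1 ^ p + xy.2 ^ p = 1}.Finite := by
  set A := {xy : K × K | xy.1 ^ p + xy.2 ^ p = 1}
  set f : K × K → Projectivization K (Fin 3 → K) :=
    fun xy => Projectivization.mk K ![xy.1, xy.2, 1] (affvec_ne_zero K xy.1 xy.2) with hf
  have hmaps : ∀ xy ∈ A, f xy ∈ {q : Projectivization K (Fin 3 → K) |
      q.rep 0 ^ p + q.rep 1 ^ p = q.rep 2 ^ p} := by
    rintro ⟨x, y⟩ hxy
    obtain ⟨c, hc⟩ := Projectivization.exists_smul_eq_mk_rep K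
      (![x, y, 1] : Fin 3 → K) (affvec_ne_zero K x y)
    have h0 : (f (x, y)).rep 0 = (c : K) * x := by
      rw [hf]; rw [← hc]; simp [Units.smul_def]
    have h1 : (f (x, y)).rep 1 = (c : K) * y := by
      rw [hf]; rw [← hc]; simp [Units.smul_def]
    have h2 : (f (x, y)).rep 2 = (c : K) := by
      rw [hf]; rw [← hc]; simp [Units.smul_def]
    simp only [Set.mem_setOf_eq, h0, h1, h2]
    have hxy' : x ^ p + y ^ p = 1 := hxy
    calc ((c : K) * x) ^ p + ((c : K) * y) ^ p = (c : K) ^ p * (x ^ p + y ^ p) := by ring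
    _ = (c : K) ^ p := by rw [hxy', mul_one]
  have hinj : Set.InjOn f A := by
    rintro ⟨x, y⟩ _ ⟨x', y'⟩ _ h
    rw [hf] at h
    simp only at h
    rw [Projectivization.mk_eq_mk_iff] at h
    obtain ⟨a, ha⟩ := h
    have h2 : (a : K) * 1 = 1 := by
      have := congrFun ha 2
      simpa [Units.smul_def] using this
    have ha1 : (a : K) = 1 := by simpa using h2
    have hx : x' = x := by
      have := congrFun ha 0
      simpa [Units.smul_def, ha1] using this
    have hy : y' = y := by
      have := congrFun ha 1
      simpa [Units.smul_def, ha1] using this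
    simp [hx, hy]
  exact Set.Finite.of_finite_image ((hfin.subset (Set.image_subset_iff.mpr hmaps)))
    hinj

end Affine

section PerPrime

variable {K Ω : Type} [Field K] [MeasurableSpace Ω]

lemma no_solution_zero {x y : K} (h : x ^ 0 + y ^ 0 = 1) : False := by
  simp only [pow_zero] at h
  have : (1 : K) = 0 := by linear_combination h
  exact one_ne_zero this

/-- For a fixed prime exponent `p`, the set of bad `N` divisible by `p`
(with a bad first coordinate) is finite. -/
lemma badx_mul_finite (S : ProperAdelicStructure K Ω)
    (hNor : ∀ C : ℝ, {a : K | ∫ ω, Real.log (max (S.absv ω a) 1) ∂S.ν ≤ C}.Finite)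
    {p : ℕ}
    (hA : {xy : K × K | xy.1 ^ p + xy.2 ^ p = 1}.Finite) :
    {N : ℕ | p ∣ N ∧ ∃ x y : K, x ^ N + y ^ N = 1 ∧ ¬ IsZeroOrRootOfUnity x}.Finite := by
  set A := {xy : K × K | xy.1 ^ p + xy.2 ^ p = 1} with hAdef
  have hE : (Prod.fst '' A).Finite := hA.image _
  obtain ⟨C, hC⟩ : ∃ C : ℝ, ∀ u ∈ Prod.fst '' A, hgt S u ≤ C := by
    obtain ⟨C, hC⟩ := (hE.image (hgt S)).bddAbove
    exact ⟨C, fun u hu => hC (Set.mem_image_of_mem _ hu)⟩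
  have hX : {a : K | hgt S a ≤ C}.Finite := hNor C
  have key : {N : ℕ | p ∣ N ∧ ∃ x y : K, x ^ N + y ^ N = 1 ∧ ¬ IsZeroOrRootOfUnity x} ⊆
      ⋃ a ∈ {a : K | hgt S a ≤ C ∧ ¬ IsZeroOrRootOfUnity a},
        (fun k => p * k) '' {k : ℕ | a ^ k ∈ Prod.fst '' A} := by
    rintro N ⟨hdvd, x, y, hsol, hx⟩
    have hN0 : N ≠ 0 := by
      rintro rfl
      exact no_solution_zero hsol
    obtain ⟨M, rfl⟩ := hdvd
    have hM0 : M ≠ 0 := by rintro rfl; simp at hN0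
    have hmem : (x ^ M, y ^ M) ∈ A := by
      show (x ^ M) ^ p + (y ^ M) ^ p = 1
      rw [← pow_mul, ← pow_mul, mul_comm M p]
      exact hsol
    have hxM : x ^ M ∈ Prod.fst '' A := ⟨(x ^ M, y ^ M), hmem, rfl⟩
    have hhx : hgt S x ≤ C := by
      have h1 : hgt S (x ^ M) = M * hgt S x := hgt_pow S x M
      have h2 : hgt S x ≤ (M : ℝ) * hgt S x :=
        le_mul_of_one_le_left (hgt_nonneg S x)
          (by exact_mod_cast Nat.one_le_iff_ne_zero.mpr hM0)
      calc hgt S x ≤ hgt S (x ^ M) := by rw [h1]; exact h2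
        _ ≤ C := hC _ hxM
    exact Set.mem_biUnion (⟨hhx, hx⟩ : _) ⟨M, hxM, rfl⟩
  refine Set.Finite.subset (Set.Finite.biUnion (hX.subset fun a ha => ha.1) ?_) key
  intro a ha
  exact (hE.preimage ((pow_injective_of_not_rou ha.2).injOn)).image _

/-- The full per-prime finiteness: bad exponents divisible by `p` form a finite set. -/
lemma bad_mul_finite (S : ProperAdelicStructure K Ω)
    (hNor : ∀ C : ℝ, {a : K | ∫ ω, Real.log (max (S.absv ω a) 1) ∂S.ν ≤ C}.Finite)
    {p : ℕ}
    (hA : {xy : K × K | xy.1 ^ p + xy.2 ^ p = 1}.Finite) :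
    {N : ℕ | p ∣ N ∧ ∃ x y : K, x ^ N + y ^ N = 1 ∧
      ¬ (IsZeroOrRootOfUnity x ∧ IsZeroOrRootOfUnity y)}.Finite := by
  have hA' : {xy : K × K | xy.1 ^ p + xy.2 ^ p = 1}.Finite := hA
  have hswap : {xy : K × K | xy.2 ^ p + xy.1 ^ p = 1}.Finite := by
    have : {xy : K × K | xy.2 ^ p + xy.1 ^ p = 1} =
        Prod.swap ⁻¹' {xy : K × K | xy.1 ^ p + xy.2 ^ p = 1} := by
      ext xy; simp [Prod.swap]
    rw [this]
    exact hA.preimage (Prod.swap_injective.injOn)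
  refine Set.Finite.subset ((badx_mul_finite S hNor hA).union
    (badx_mul_finite S hNor (p := p) ?_)) ?_
  · exact hA
  · rintro N ⟨hdvd, x, y, hsol, hxy⟩
    rw [not_and_or] at hxy
    rcases hxy with hx | hy
    · exact Or.inl ⟨hdvd, x, y, hsol, hx⟩
    · exact Or.inr ⟨hdvd, y, x, by rw [add_comm]; exact hsol, hy⟩

end PerPrime

section Primes

open Finset Filter

lemma totient_prod_primes {s : Finset ℕ} (h : ∀ q ∈ s, q.Prime) :
    Nat.totient (∏ q ∈ s, q) = ∏ q ∈ s, (q - 1) := by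
  induction s using Finset.induction_on with
  | empty => simp
  | insert a s' ha ih =>
    rw [Finset.prod_insert ha, Finset.prod_insert ha]
    have hcop : Nat.Coprime a (∏ q ∈ s', q) := by
      rw [Nat.coprime_prod_right_iff]
      intro q hq
      exact (Nat.coprime_primes (h a (Finset.mem_insert_self a s'))
        (h q (Finset.mem_insert_of_mem hq))).mpr (by rintro rfl; exact ha hq)
    rw [Nat.totient_mul hcop, ih (fun q hq => h q (Finset.mem_insert_of_mem hq)),
      Nat.totient_prime (h a (Finset.mem_insert_self a s'))]

lemma exists_primes_prod_lt (p₀ : ℕ) {ε : ℝ} (hε : 0 < ε) :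
    ∃ s : Finset ℕ, (∀ q ∈ s, q.Prime ∧ p₀ ≤ q) ∧
      ((Nat.totient (∏ q ∈ s, q) : ℝ) / ((∏ q ∈ s, q : ℕ) : ℝ)) < ε := by
  classical
  set f : ℕ → ℝ := Set.indicator {p | p.Prime} (fun n => 1 / n) with hfdef
  have hf : ∀ n, 0 ≤ f n := fun n => Set.indicator_nonneg (fun p _ => by positivity) n
  have hdiv : Tendsto (fun n => ∑ i ∈ range n, f i) atTop atTop :=
    (not_summable_iff_tendsto_nat_atTop_of_nonneg hf).mp not_summable_one_div_on_primes
  set c₀ : ℝ := ∑ q ∈ (range p₀).filter Nat.Prime, (1 / q : ℝ) with hc₀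
  obtain ⟨n, hn⟩ := (hdiv.eventually_ge_atTop (c₀ + (-Real.log ε + 1))).exists
  set t := (range n).filter Nat.Prime with ht
  set s := t.filter (fun q => p₀ ≤ q) with hs
  have hsq : ∀ q ∈ s, q.Prime ∧ p₀ ≤ q := by
    intro q hq
    rw [hs, Finset.mem_filter] at hq
    rw [ht, Finset.mem_filter] at *
    exact ⟨hq.1.2, hq.2⟩
  refine ⟨s, hsq, ?_⟩
  -- the sum over `s` is large
  have hsum_t : ∑ i ∈ range n, f i = ∑ q ∈ t, (1 / q : ℝ) := by
    rw [ht, Finset.sum_filter]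
    refine Finset.sum_congr rfl fun i _ => ?_
    by_cases hi : i.Prime <;> simp [hfdef, Set.indicator_apply, hi]
  have hsplit : ∑ q ∈ s, (1 / q : ℝ) + ∑ q ∈ t.filter (fun q => ¬ p₀ ≤ q), (1 / q : ℝ)
      = ∑ q ∈ t, (1 / q : ℝ) := Finset.sum_filter_add_sum_filter_not t _ _
  have hsmall : ∑ q ∈ t.filter (fun q => ¬ p₀ ≤ q), (1 / q : ℝ) ≤ c₀ := by
    refine Finset.sum_le_sum_of_subset_of_nonneg ?_ (fun i _ _ => by positivity)
    intro q hq
    rw [Finset.mem_filter] at hq ⊢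
    rw [ht, Finset.mem_filter] at hq
    exact ⟨Finset.mem_range.mpr (by omega), hq.1.2⟩
  have hsum_s : -Real.log ε + 1 ≤ ∑ q ∈ s, (1 / q : ℝ) := by
    have := hn
    rw [hsum_t, ← hsplit] at this
    linarith
  -- rewrite the ratio as a product
  have hcast : ((Nat.totient (∏ q ∈ s, q) : ℝ) / ((∏ q ∈ s, q : ℕ) : ℝ))
      = ∏ q ∈ s, (1 - 1 / q : ℝ) := by
    rw [totient_prod_primes (fun q hq => (hsq q hq).1)]
    push_cast
    rw [← Finset.prod_div_distrib]
    refine Finset.prod_congr rfl fun q hq => ?_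
    have hq2 : (2 : ℕ) ≤ q := (hsq q hq).1.two_le
    have hq0 : (q : ℝ) ≠ 0 := by positivity
    rw [Nat.cast_sub (by omega), Nat.cast_one]
    field_simp
  rw [hcast]
  have hprod_le : ∏ q ∈ s, (1 - 1 / q : ℝ) ≤ Real.exp (∑ q ∈ s, -(1 / q : ℝ)) := by
    rw [Real.exp_sum]
    refine Finset.prod_le_prod (fun q hq => ?_) (fun q hq => ?_)
    · have hq2 : (2 : ℕ) ≤ q := (hsq q hq).1.two_le
      have h1 : (1 : ℝ) / q ≤ 1 := by
        rw [div_le_one (by positivity)]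
        exact_mod_cast by omega
      linarith
    · have := Real.add_one_le_exp (-(1 / q : ℝ))
      linarith
  have hexp : Real.exp (∑ q ∈ s, -(1 / q : ℝ)) < ε := by
    rw [← Real.exp_log hε]
    refine Real.exp_lt_exp.mpr ?_
    rw [Finset.sum_neg_distrib]
    linarith
  linarith

end Primes

section Count

lemma count_coprime_le (P m : ℕ) (hP : 0 < P) :
    ((Finset.Icc 1 m).filter (fun N => Nat.Coprime P N)).card ≤ P.totient * (m / P + 1) := by
  have h : Finset.Icc 1 m = Finset.Ico 1 (1 + m) := by
    ext N; simp only [Finset.mem_Icc, Finset.mem_Ico]; omega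
  rw [h]
  exact Nat.Ico_filter_coprime_le 1 m hP.ne'

end Count

end FPD

open Filter

theorem fermat_property_density_one
    {K Ω : Type} [Field K] [MeasurableSpace Ω]
    (S : ProperAdelicStructure K Ω) (hNor : S.Northcott)
    (p₀ : ℕ) (hp₀ : 0 < p₀)
    (hfin : ∀ p : ℕ, p.Prime → p₀ ≤ p →
      {q : Projectivization K (Fin 3 → K) |
        q.rep 0 ^ p + q.rep 1 ^ p = q.rep 2 ^ p}.Finite) :
    Tendsto (fun m : ℕ =>
        (({N : ℕ | 1 ≤ N ∧ N ≤ m ∧ ∀ x y : K, x ^ N + y ^ N = 1 →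
            IsZeroOrRootOfUnity x ∧ IsZeroOrRootOfUnity y}.ncard : ℝ) / m))
      atTop (nhds 1) := by
  classical
  set Bad : Set ℕ := {N | ∃ x y : K, x ^ N + y ^ N = 1 ∧
      ¬(IsZeroOrRootOfUnity x ∧ IsZeroOrRootOfUnity y)} with hBadDef
  have hbadp : ∀ p : ℕ, p.Prime → p₀ ≤ p → {N : ℕ | p ∣ N ∧ N ∈ Bad}.Finite := by
    intro p hp hle
    exact FPD.bad_mul_finite S hNor (FPD.affine_fermat_finite K (hfin p hp hle))
  set b : ℕ → ℕ := fun m => ((Finset.Icc 1 m).filter (fun N => N ∈ Bad)).card with hbdef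
  -- identify the good set with a Finset
  have hset : ∀ m : ℕ, {N : ℕ | 1 ≤ N ∧ N ≤ m ∧ ∀ x y : K, x ^ N + y ^ N = 1 →
      IsZeroOrRootOfUnity x ∧ IsZeroOrRootOfUnity y}
      = ↑((Finset.Icc 1 m).filter (fun N => ¬ N ∈ Bad)) := by
    intro m
    ext N
    simp only [Finset.coe_filter, Finset.mem_Icc, Set.mem_setOf_eq, hBadDef]
    constructor
    · rintro ⟨h1, h2, h3⟩
      refine ⟨⟨h1, h2⟩, ?_⟩
      rintro ⟨x, y, hxy, hbad⟩
      exact hbad (h3 x y hxy)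
    · rintro ⟨⟨h1, h2⟩, h3⟩
      refine ⟨h1, h2, fun x y hxy => ?_⟩
      by_contra hc
      exact h3 ⟨x, y, hxy, hc⟩
  -- card of the good finset
  have hcard : ∀ m : ℕ, ((Finset.Icc 1 m).filter (fun N => ¬ N ∈ Bad)).card = m - b m := by
    intro m
    rw [Finset.filter_not, Finset.card_sdiff_of_subset (Finset.filter_subset _ _), Nat.card_Icc,
      Nat.add_sub_cancel]
  have hble : ∀ m : ℕ, b m ≤ m := by
    intro m
    calc b m ≤ (Finset.Icc 1 m).card := Finset.card_filter_le _ _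
      _ = m := by rw [Nat.card_Icc]; omega
  -- the bad ratio tends to 0
  have hb0 : Tendsto (fun m : ℕ => (b m : ℝ) / m) atTop (nhds 0) := by
    rw [Metric.tendsto_atTop]
    intro ε hε
    obtain ⟨s, hsq, hsmall⟩ := FPD.exists_primes_prod_lt p₀ (half_pos hε)
    set P : ℕ := ∏ q ∈ s, q with hPdef
    have hP : 0 < P := Finset.prod_pos fun q hq => (hsq q hq).1.pos
    have hT : (Bad ∩ {N | ∃ q ∈ s, q ∣ N}).Finite := by
      refine Set.Finite.subset (Set.Finite.biUnion s.finite_toSet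
        (fun q hq => hbadp q (hsq q hq).1 (hsq q hq).2)) ?_
      rintro N ⟨hN, q, hq, hdvd⟩
      exact Set.mem_biUnion hq ⟨hdvd, hN⟩
    set T := hT.toFinset with hTdef
    have hcount : ∀ m : ℕ, b m ≤ T.card + P.totient * (m / P + 1) := by
      intro m
      have hsub : (Finset.Icc 1 m).filter (fun N => N ∈ Bad) ⊆
          T ∪ (Finset.Icc 1 m).filter (fun N => Nat.Coprime P N) := by
        intro N hN
        rw [Finset.mem_filter] at hN
        by_cases hNT : N ∈ Bad ∩ {N | ∃ q ∈ s, q ∣ N}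
        · exact Finset.mem_union_left _ (hT.mem_toFinset.mpr hNT)
        · refine Finset.mem_union_right _ (Finset.mem_filter.mpr ⟨hN.1, ?_⟩)
          have hnd : ∀ q ∈ s, ¬ q ∣ N := by
            intro q hq hdvd
            exact hNT ⟨hN.2, q, hq, hdvd⟩
          rw [hPdef]
          rw [Nat.coprime_prod_left_iff]
          intro q hq
          exact ((hsq q hq).1.coprime_iff_not_dvd).mpr (hnd q hq)
      calc b m ≤ (T ∪ (Finset.Icc 1 m).filter (fun N => Nat.Coprime P N)).card :=
            Finset.card_le_card hsub
        _ ≤ T.card + ((Finset.Icc 1 m).filter (fun N => Nat.Coprime P N)).card :=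
            Finset.card_union_le _ _
        _ ≤ T.card + P.totient * (m / P + 1) := by
            exact Nat.add_le_add_left (FPD.count_coprime_le P m hP) _
    set A : ℝ := (T.card : ℝ) + (P.totient : ℝ) with hAdef
    have hA0 : 0 ≤ A := by positivity
    obtain ⟨M₀, hM₀⟩ := exists_nat_gt (A / (ε / 2))
    refine ⟨max M₀ 1, fun m hm => ?_⟩
    have hm1 : 1 ≤ m := le_trans (le_max_right _ _) hm
    have hmM : M₀ ≤ m := le_trans (le_max_left _ _) hm
    have hmpos : (0 : ℝ) < m := by exact_mod_cast hm1
    have hP0 : (P : ℝ) ≠ 0 := by positivity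
    have hbound : (b m : ℝ) ≤ A + ((P.totient : ℝ) / P) * m := by
      have h1 : (b m : ℝ) ≤ (T.card : ℝ) + (P.totient : ℝ) * (((m / P : ℕ) : ℝ) + 1) := by
        exact_mod_cast hcount m
      have h2 : ((m / P : ℕ) : ℝ) ≤ (m : ℝ) / P := Nat.cast_div_le
      have h3 : (P.totient : ℝ) * (((m / P : ℕ) : ℝ) + 1)
          ≤ (P.totient : ℝ) * ((m : ℝ) / P + 1) :=
        mul_le_mul_of_nonneg_left (by linarith) (by positivity)
      have h4 : (P.totient : ℝ) * ((m : ℝ) / P + 1)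
          = ((P.totient : ℝ) / P) * m + (P.totient : ℝ) := by
        field_simp
      rw [hAdef]
      have h5 : (b m : ℝ) ≤ ((P.totient : ℝ) / P) * m + (P.totient : ℝ) + (T.card : ℝ) := by
        linarith
      linarith
    have hAm : A / m < ε / 2 := by
      rw [div_lt_iff₀ hmpos]
      rw [div_lt_iff₀ (half_pos hε)] at hM₀
      have hM₀m : (M₀ : ℝ) ≤ m := by exact_mod_cast hmM
      have hmul : (ε / 2) * (M₀ : ℝ) ≤ (ε / 2) * m :=
        mul_le_mul_of_nonneg_left hM₀m (le_of_lt (half_pos hε))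
      linarith
    have hratio : (b m : ℝ) / m ≤ A / m + (P.totient : ℝ) / P := by
      calc (b m : ℝ) / m ≤ (A + ((P.totient : ℝ) / P) * m) / m :=
            div_le_div_of_nonneg_right hbound hmpos.le |>.trans_eq rfl
        _ = A / m + (P.totient : ℝ) / P := by
            rw [add_div, mul_div_assoc, div_self (ne_of_gt hmpos), mul_one]
    have hnn : (0 : ℝ) ≤ (b m : ℝ) / m := div_nonneg (Nat.cast_nonneg _) hmpos.le
    rw [Real.dist_eq, sub_zero, abs_of_nonneg hnn]
    calc (b m : ℝ) / m ≤ A / m + (P.totient : ℝ) / P := hratio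
      _ < ε / 2 + ε / 2 := by
          have hPratio : (P.totient : ℝ) / P < ε / 2 := by
            rw [hPdef]
            exact_mod_cast hsmall
          linarith
      _ = ε := by ring
  -- conclude
  have hmain : Tendsto (fun m : ℕ => 1 - (b m : ℝ) / m) atTop (nhds 1) := by
    have := (tendsto_const_nhds (x := (1 : ℝ)) (f := atTop)).sub hb0
    simpa using this
  refine hmain.congr' ?_
  filter_upwards [eventually_ge_atTop 1] with m hm
  have hmpos : (0 : ℝ) < m := by exact_mod_cast hm
  rw [hset m, Set.ncard_coe_finset, hcard m, Nat.cast_sub (hble m), sub_div,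
    div_self (ne_of_gt hmpos)]
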